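/- Let q, j be integers with 1 ≤ j ≤ q and let δ > 0 be real with j·(1+δ) < q + 1 (i.e. δ < δ* = (q+1−j)/j). Then for every real ε with 0 < ε < 2·(q + 1 − j·(1+δ))/(q·(q+1)), the strict inequality (1+δ)·(1−ε)^j > (1−ε)^{q+1} + δ holds. -/

import Mathlib

/-- Quadratic upper bound: `(1-x)^n ≤ 1 - n x + n(n-1)/2 x²` for `0 ≤ x ≤ 1`. -/
lemma bern2 (n : ℕ) (x : ℝ) (hx : 0 ≤ x) (hx1 : x ≤ 1) :
    (1 - x) ^ n ≤ 1 - n * x + ((n : ℝ) * ((n : ℝ) - 1)) / 2 * x ^ 2 := by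
  induction n with
  | zero => simp
  | succ n ih =>
    have h1x : (0:ℝ) ≤ 1 - x := by linarith
    have h : (1 - x) ^ (n + 1) ≤ (1 - x) * (1 - (n:ℝ) * x + ((n : ℝ) * ((n : ℝ) - 1)) / 2 * x ^ 2) := by
      rw [pow_succ, mul_comm]
      exact mul_le_mul_of_nonneg_left ih h1x
    have hn : (0:ℝ) ≤ (n:ℝ) * ((n:ℝ) - 1) := by
      rcases Nat.eq_zero_or_pos n with h0 | h0
      · simp [h0]
      · have : (1:ℝ) ≤ (n:ℝ) := by exact_mod_cast h0
        nlinarith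
    push_cast
    nlinarith [h, mul_nonneg hn (mul_nonneg hx (sq_nonneg x))]

/-- the Rouché inequality on the circle `|λ| = 1 − ε` in the case
`δ < δ* = (q+1−j)/j`: for `0 < ε < 2(q+1−j(1+δ))/(q(q+1))` one has
`(1+δ)(1−ε)^j > (1−ε)^{q+1} + δ`. -/
theorem stmt_17 (q j : ℕ) (hj : 1 ≤ j) (hjq : j ≤ q) (δ : ℝ) (hδ : 0 < δ)
    (hδs : (j : ℝ) * (1 + δ) < (q : ℝ) + 1) (ε : ℝ) (hε0 : 0 < ε)
    (hε : ε < 2 * ((q : ℝ) + 1 - (j : ℝ) * (1 + δ)) / ((q : ℝ) * ((q : ℝ) + 1))) :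
    (1 - ε) ^ (q + 1) + δ < (1 + δ) * (1 - ε) ^ j := by
  have hq1 : 1 ≤ q := le_trans hj hjq
  have hqR : (1:ℝ) ≤ (q:ℝ) := by exact_mod_cast hq1
  have hjR : (1:ℝ) ≤ (j:ℝ) := by exact_mod_cast hj
  have hD : (0:ℝ) < (q:ℝ) * ((q:ℝ) + 1) := by nlinarith
  have hεD : ε * ((q:ℝ) * ((q:ℝ) + 1)) < 2 * ((q : ℝ) + 1 - (j : ℝ) * (1 + δ)) :=
    (lt_div_iff₀ hD).mp hε
  have hε1 : ε ≤ 1 := by nlinarith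
  have h1 : 1 - (j:ℝ) * ε ≤ (1 - ε) ^ j := by
    have := one_add_mul_le_pow (a := -ε) (by linarith) j
    simpa [mul_comm, ← sub_eq_add_neg] using this
  have h2 : (1 - ε) ^ (q + 1) ≤ 1 - (q + 1 : ℕ) * ε + (((q+1 : ℕ) : ℝ) * (((q+1 : ℕ) : ℝ) - 1)) / 2 * ε ^ 2 :=
    bern2 (q + 1) ε (le_of_lt hε0) hε1
  have h3 : (1 + δ) * (1 - (j:ℝ) * ε) ≤ (1 + δ) * (1 - ε) ^ j :=
    mul_le_mul_of_nonneg_left h1 (by linarith)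
  push_cast at h2
  nlinarith [mul_lt_mul_of_pos_left hεD hε0]
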